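/- If a Banach algebra A has the Dunford–Pettis property, then the multiplication of A is jointly weakly sequentially continuous: x_n y_n → 0 weakly whenever x_n → 0 weakly and y_n → 0 weakly in A. -/

import Mathlib

open Filter Topology ENNReal

/-- A sequence is weakly null if `f (x n) → 0` for every continuous linear functional `f`. -/
def WeaklyNull {A : Type*} [NormedAddCommGroup A] [NormedSpace ℝ A] (x : ℕ → A) : Prop :=
  ∀ f : A →L[ℝ] ℝ, Tendsto (fun n => f (x n)) atTop (𝓝 0)

/-- A sequence is weakly Cauchy if `f (x n)` converges for every continuous linear functional. -/
def WeaklyCauchy {A : Type*} [NormedAddCommGroup A] [NormedSpace ℝ A] (x : ℕ → A) : Prop :=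
  ∀ f : A →L[ℝ] ℝ, ∃ L : ℝ, Tendsto (fun n => f (x n)) atTop (𝓝 L)

/-- `E ⊆ A*` is an L-set: `sup_{f ∈ E} |f (x n)| → 0` for every weakly null `x`. -/
def LSet {A : Type*} [NormedAddCommGroup A] [NormedSpace ℝ A] (E : Set (A →L[ℝ] ℝ)) : Prop :=
  ∀ x : ℕ → A, WeaklyNull x → ∀ ε > (0 : ℝ), ∃ N : ℕ, ∀ n ≥ N, ∀ f ∈ E, |f (x n)| < ε

/-- A set is weakly precompact if every sequence in it has a weakly Cauchy subsequence. -/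
def WeaklyPrecompact {A : Type*} [NormedAddCommGroup A] [NormedSpace ℝ A] (K : Set A) : Prop :=
  ∀ x : ℕ → A, (∀ n, x n ∈ K) → ∃ φ : ℕ → ℕ, StrictMono φ ∧ WeaklyCauchy (x ∘ φ)

/-- A map is completely continuous if it sends weakly null sequences to norm null sequences. -/
def CompletelyContinuous {A B : Type*} [NormedAddCommGroup A] [NormedSpace ℝ A]
    [NormedAddCommGroup B] (T : A → B) : Prop :=
  ∀ x : ℕ → A, WeaklyNull x → Tendsto (fun n => ‖T (x n)‖) atTop (𝓝 0)

/-- The multiplication operator `T_f : A → A*`, `(T_f a) x = f (a * x)`. -/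
noncomputable def Tf {A : Type*} [NormedRing A] [NormedAlgebra ℝ A]
    (f : A →L[ℝ] ℝ) (a : A) : A →L[ℝ] ℝ :=
  f.comp (ContinuousLinearMap.mul ℝ A a)

/-- The multiplication operator `S_f : A → A*`, `(S_f a) x = f (x * a)`. -/
noncomputable def Sf {A : Type*} [NormedRing A] [NormedAlgebra ℝ A]
    (f : A →L[ℝ] ℝ) (a : A) : A →L[ℝ] ℝ :=
  f.comp ((ContinuousLinearMap.mul ℝ A).flip a)

/-- `w` is an ℓ¹-sequence: equivalent to the unit vector basis of ℓ¹. -/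
def IsL1Sequence {A : Type*} [NormedAddCommGroup A] [NormedSpace ℝ A] (w : ℕ → A) : Prop :=
  ∃ c C : ℝ, 0 < c ∧ ∀ (s : Finset ℕ) (lam : ℕ → ℝ),
    c * ∑ n ∈ s, |lam n| ≤ ‖∑ n ∈ s, lam n • w n‖ ∧
      ‖∑ n ∈ s, lam n • w n‖ ≤ C * ∑ n ∈ s, |lam n|

/-- The Schur property: weakly convergent sequences are norm convergent. -/
def SchurProperty (A : Type*) [NormedAddCommGroup A] [NormedSpace ℝ A] : Prop :=
  ∀ (x : ℕ → A) (L : A),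
    (∀ f : A →L[ℝ] ℝ, Tendsto (fun n => f (x n)) atTop (𝓝 (f L))) →
      Tendsto x atTop (𝓝 L)


theorem jwsc_of_DPP {A : Type*} [NormedRing A] [NormedAlgebra ℝ A] [CompleteSpace A]
    (hDPP : ∀ (x : ℕ → A) (F : ℕ → (A →L[ℝ] ℝ)), WeaklyNull x →
      (∀ μ : (A →L[ℝ] ℝ) →L[ℝ] ℝ, Tendsto (fun n => μ (F n)) atTop (𝓝 0)) →
      Tendsto (fun n => F n (x n)) atTop (𝓝 0)) :
    ∀ x y : ℕ → A, WeaklyNull x → WeaklyNull y → WeaklyNull (fun n => x n * y n) := by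
  intro x y hx hy f
  -- L : A →L[ℝ] (A →L[ℝ] ℝ),  L a = f ∘ (mul a)
  set L : A →L[ℝ] (A →L[ℝ] ℝ) :=
    (ContinuousLinearMap.compL ℝ A A ℝ f).comp (ContinuousLinearMap.mul ℝ A) with hL
  have key := hDPP y (fun n => L (x n)) hy (fun μ => hx (μ.comp L))
  simpa [hL] using key
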